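/- Let n ≥ 1, T ≥ 1, 1 ≤ t ≤ T, and let c = (c_{ij}), l = (l_{ij}) be nonnegative. Let (Ω, F, μ) be a probability space carrying measurable random pairs (d_s, P_s) for s = 1,…,t, independent and identically distributed, where each d_s takes values in [0,1]^n and each P_s takes values in the set of row-stochastic matrices in [0,1]^{n×n}. For S ∈ Δ_{n−1} define G(S, d, P) = M_c( min(S,d) − Pᵀ min(S,d) ) − ∑_{i,j=1}^n l_{ij} P_{ij} min(d_i, S_i), with min componentwise. Then μ( { ω : sup_{S ∈ Δ_{n−1}} | (1/t) ∑_{s=1}^t G(S, d_s(ω), P_s(ω)) − E[G(S, d₁, P₁)] | ≤ 40 · n³ · (max_{i,j} c_{ij} + max_{i,j} l_{ij}) · √(log T) / √t } ) ≥ 1 − 3/T². -/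

import Mathlib

open MeasureTheory ProbabilityTheory

/-- The repositioning cost `M_c(v)`: the minimum-cost network flow achieving net change `v`. -/
noncomputable def repoCost {n : ℕ} (c : Fin n → Fin n → ℝ) (v : Fin n → ℝ) : ℝ :=
  sInf {r : ℝ | ∃ ξ : Fin n → Fin n → ℝ, (∀ i j, 0 ≤ ξ i j) ∧
    (∀ j, (∑ i, ξ i j) - (∑ k, ξ j k) = v j) ∧ r = ∑ i, ∑ j, c i j * ξ i j}

/-- `P` is a row-stochastic matrix with entries in `[0,1]`. -/
def RowStochastic {n : ℕ} (P : Fin n → Fin n → ℝ) : Prop :=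
  (∀ i j, 0 ≤ P i j ∧ P i j ≤ 1) ∧ ∀ i, (∑ j, P i j) = 1

/-- The relabeled (surrogate) modified one-period cost of a base-stock policy with level `S`:
`G(S, d, P) = M_c(min(S,d) − Pᵀ min(S,d)) − ∑_{i,j} l_{ij} P_{ij} min(d_i, S_i)`. -/
noncomputable def Gcost {n : ℕ} (c l : Fin n → Fin n → ℝ)
    (S d : Fin n → ℝ) (P : Fin n → Fin n → ℝ) : ℝ :=
  repoCost c (fun j => min (S j) (d j) - ∑ i, P i j * min (S i) (d i))
    - ∑ i, ∑ j, l i j * P i j * min (d i) (S i)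

namespace Stmt11Aux

variable {n : ℕ} {c : Fin n → Fin n → ℝ} {cmax : ℝ}

def repoSet (c : Fin n → Fin n → ℝ) (v : Fin n → ℝ) : Set ℝ :=
  {r : ℝ | ∃ ξ : Fin n → Fin n → ℝ, (∀ i j, 0 ≤ ξ i j) ∧
    (∀ j, (∑ i, ξ i j) - (∑ k, ξ j k) = v j) ∧ r = ∑ i, ∑ j, c i j * ξ i j}

lemma repoCost_eq (v : Fin n → ℝ) : repoCost c v = sInf (repoSet c v) := rfl

lemma repoSet_nonneg (hc : ∀ i j, 0 ≤ c i j) (v : Fin n → ℝ) :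
    ∀ r ∈ repoSet c v, (0:ℝ) ≤ r := by
  rintro r ⟨ξ, hξ, -, rfl⟩
  exact Finset.sum_nonneg fun i _ => Finset.sum_nonneg fun j _ =>
    mul_nonneg (hc i j) (hξ i j)

lemma bddBelow_repoSet (hc : ∀ i j, 0 ≤ c i j) (v : Fin n → ℝ) :
    BddBelow (repoSet c v) :=
  ⟨0, fun r hr => repoSet_nonneg hc v r hr⟩

lemma repoCost_nonneg (hc : ∀ i j, 0 ≤ c i j) (v : Fin n → ℝ) :
    0 ≤ repoCost c v :=
  Real.sInf_nonneg (repoSet_nonneg hc v)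

/-- The star flow through a fixed node `i0`. -/
def starFlow (i0 : Fin n) (w : Fin n → ℝ) : Fin n → Fin n → ℝ :=
  fun i j => (if j = i0 then max (-(w i)) 0 else 0) + (if i = i0 then max (w j) 0 else 0)

lemma starFlow_nonneg (i0 : Fin n) (w : Fin n → ℝ) (i j : Fin n) :
    0 ≤ starFlow i0 w i j := by
  unfold starFlow
  positivity

lemma starFlow_balance (i0 : Fin n) (w : Fin n → ℝ) (hw : ∑ j, w j = 0) (j : Fin n) :
    (∑ i, starFlow i0 w i j) - (∑ k, starFlow i0 w j k) = w j := by
  unfold starFlow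
  simp only [Finset.sum_add_distrib, Finset.sum_ite_eq', Finset.mem_univ, if_true]
  have h1 : ∑ i, (if j = i0 then max (-(w i)) 0 else 0)
      = if j = i0 then ∑ i, max (-(w i)) 0 else 0 := by
    split_ifs <;> simp
  have h2 : ∑ k, (if j = i0 then max (w k) 0 else 0)
      = if j = i0 then ∑ k, max (w k) 0 else 0 := by
    split_ifs <;> simp
  rw [h1, h2]
  have key : ∑ i, max (-(w i)) 0 = ∑ i, max (w i) 0 := by
    have : ∑ i, (max (w i) 0 - max (-(w i)) 0) = 0 := by
      have : ∀ i, max (w i) 0 - max (-(w i)) 0 = w i := fun i => by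
        rcases le_total (w i) 0 with h | h
        · rw [max_eq_right h, max_eq_left (by linarith)]; ring
        · rw [max_eq_left h, max_eq_right (by linarith)]; ring
      simp_rw [this]; exact hw
    have := Finset.sum_sub_distrib (s := Finset.univ)
      (f := fun i => max (w i) 0) (g := fun i => max (-(w i)) 0)
    linarith [this ▸ ‹∑ i, (max (w i) 0 - max (-(w i)) 0) = 0›]
  have hwj : max (w j) 0 - max (-(w j)) 0 = w j := by
    rcases le_total (w j) 0 with h | h
    · rw [max_eq_right h, max_eq_left (by linarith)]; ring
    · rw [max_eq_left h, max_eq_right (by linarith)]; ring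
  split_ifs with h
  · rw [key]; linarith
  · linarith

lemma starFlow_cost (i0 : Fin n) (w : Fin n → ℝ) (hc : ∀ i j, 0 ≤ c i j)
    (hcmax : ∀ i j, c i j ≤ cmax) :
    ∑ i, ∑ j, c i j * starFlow i0 w i j ≤ cmax * ∑ j, |w j| := by
  have hcm : 0 ≤ cmax := le_trans (hc i0 i0) (hcmax i0 i0)
  have step1 : ∑ i, ∑ j, c i j * starFlow i0 w i j
      ≤ ∑ i, ∑ j, cmax * starFlow i0 w i j := by
    apply Finset.sum_le_sum; intro i _
    apply Finset.sum_le_sum; intro j _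
    exact mul_le_mul_of_nonneg_right (hcmax i j) (starFlow_nonneg i0 w i j)
  refine step1.trans ?_
  have hrw : (∑ i, ∑ j, cmax * starFlow i0 w i j) = cmax * ∑ i, ∑ j, starFlow i0 w i j := by
    simp_rw [← Finset.mul_sum]
  rw [hrw]
  apply mul_le_mul_of_nonneg_left _ hcm
  have h1 : ∑ i, ∑ j, starFlow i0 w i j
      = (∑ i, max (-(w i)) 0) + ∑ j, max (w j) 0 := by
    unfold starFlow
    simp only [Finset.sum_add_distrib]
    congr 1
    · refine Finset.sum_congr rfl fun i _ => ?_
      simp [Finset.sum_ite_eq']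
    · rw [Finset.sum_comm]
      refine Finset.sum_congr rfl fun j _ => ?_
      simp [Finset.sum_ite_eq']
  rw [h1]
  have h2 : ∀ j, max (-(w j)) 0 + max (w j) 0 = |w j| := fun j => by
    rcases le_total (w j) 0 with h | h
    · rw [max_eq_left (by linarith), max_eq_right h, abs_of_nonpos h]; ring
    · rw [max_eq_right (by linarith), max_eq_left h, abs_of_nonneg h]; ring
  have h3 : (∑ i, max (-(w i)) 0) + ∑ j, max (w j) 0
      = ∑ j, (max (-(w j)) 0 + max (w j) 0) := by rw [Finset.sum_add_distrib]
  rw [h3]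
  exact le_of_eq (Finset.sum_congr rfl fun j _ => h2 j)

lemma repoSet_nonempty (i0 : Fin n) (v : Fin n → ℝ) (hv : ∑ j, v j = 0) :
    (repoSet c v).Nonempty :=
  ⟨_, ⟨starFlow i0 v, starFlow_nonneg i0 v, starFlow_balance i0 v hv, rfl⟩⟩

lemma repoCost_le_star (i0 : Fin n) (hc : ∀ i j, 0 ≤ c i j) (hcmax : ∀ i j, c i j ≤ cmax)
    (v : Fin n → ℝ) (hv : ∑ j, v j = 0) :
    repoCost c v ≤ cmax * ∑ j, |v j| := by
  refine le_trans (csInf_le (bddBelow_repoSet hc v)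
    ⟨starFlow i0 v, starFlow_nonneg i0 v, starFlow_balance i0 v hv, rfl⟩) ?_
  exact starFlow_cost i0 v hc hcmax

lemma repoCost_le_add (i0 : Fin n) (hc : ∀ i j, 0 ≤ c i j) (hcmax : ∀ i j, c i j ≤ cmax)
    (v v' : Fin n → ℝ) (hv : ∑ j, v j = 0) (hv' : ∑ j, v' j = 0) :
    repoCost c v ≤ repoCost c v' + cmax * ∑ j, |v j - v' j| := by
  have h : repoCost c v - cmax * ∑ j, |v j - v' j| ≤ sInf (repoSet c v') := by
    apply le_csInf (repoSet_nonempty i0 v' hv')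
    rintro r' ⟨ξ', hξ'pos, hξ'bal, rfl⟩
    have hw : ∑ j, (v j - v' j) = 0 := by
      rw [Finset.sum_sub_distrib, hv, hv']; ring
    set w := fun j => v j - v' j with hwdef
    have hfeas : repoCost c v ≤ ∑ i, ∑ j, c i j * (ξ' i j + starFlow i0 w i j) := by
      apply csInf_le (bddBelow_repoSet hc v)
      refine ⟨fun i j => ξ' i j + starFlow i0 w i j,
        fun i j => add_nonneg (hξ'pos i j) (starFlow_nonneg i0 w i j), fun j => ?_, rfl⟩
      have hb := starFlow_balance i0 w hw j
      simp only [Finset.sum_add_distrib]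
      have := hξ'bal j
      simp only [hwdef] at hb
      linarith
    have hcost : ∑ i, ∑ j, c i j * (ξ' i j + starFlow i0 w i j)
        = (∑ i, ∑ j, c i j * ξ' i j) + ∑ i, ∑ j, c i j * starFlow i0 w i j := by
      simp_rw [mul_add, Finset.sum_add_distrib]
    have hstar := starFlow_cost (c := c) i0 w hc hcmax
    rw [hcost] at hfeas
    linarith
  have := h.trans_eq (repoCost_eq v').symm
  linarith

lemma abs_repoCost_sub_le (i0 : Fin n) (hc : ∀ i j, 0 ≤ c i j) (hcmax : ∀ i j, c i j ≤ cmax)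
    (v v' : Fin n → ℝ) (hv : ∑ j, v j = 0) (hv' : ∑ j, v' j = 0) :
    |repoCost c v - repoCost c v'| ≤ cmax * ∑ j, |v j - v' j| := by
  rw [abs_sub_le_iff]
  constructor
  · linarith [repoCost_le_add i0 hc hcmax v v' hv hv']
  · have := repoCost_le_add i0 hc hcmax v' v hv' hv
    have heq : ∑ j, |v' j - v j| = ∑ j, |v j - v' j| := by
      apply Finset.sum_congr rfl; intro j _; exact abs_sub_comm _ _
    linarith [heq ▸ this]

end Stmt11Aux

namespace Stmt11Aux

section Part2

variable {n : ℕ} {c l : Fin n → Fin n → ℝ} {cmax lmax : ℝ}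

lemma abs_min_sub_min (a b x : ℝ) : |min a x - min b x| ≤ |a - b| := by
  rcases le_total a x with h1 | h1 <;> rcases le_total b x with h2 | h2 <;>
    simp only [min_eq_left, min_eq_right, h1, h2] <;> rw [abs_sub_le_iff] <;>
    constructor <;> cases' abs_cases (a - b) with hh hh <;> linarith

/-- The net-change vector. -/
def vvec (S dd : Fin n → ℝ) (PP : Fin n → Fin n → ℝ) : Fin n → ℝ :=
  fun j => min (S j) (dd j) - ∑ i, PP i j * min (S i) (dd i)

lemma sum_vvec (S dd : Fin n → ℝ) {PP : Fin n → Fin n → ℝ}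
    (hP : ∀ i, (∑ j, PP i j) = 1) : ∑ j, vvec S dd PP j = 0 := by
  unfold vvec
  rw [Finset.sum_sub_distrib, Finset.sum_comm]
  have : ∀ i, ∑ j, PP i j * min (S i) (dd i) = min (S i) (dd i) := fun i => by
    rw [← Finset.sum_mul, hP i, one_mul]
  simp_rw [this]
  ring

/-- Surrogate `repoCost` precomposed with projection onto the sum-zero subspace;
continuous everywhere and equal to `repoCost` on sum-zero vectors. -/
noncomputable def Msur (c : Fin n → Fin n → ℝ) (v : Fin n → ℝ) : ℝ :=
  repoCost c (fun j => v j - (∑ i, v i) / n)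

lemma Msur_eq {v : Fin n → ℝ} (hv : ∑ j, v j = 0) : Msur c v = repoCost c v := by
  unfold Msur
  rw [hv]
  simp

lemma sum_proj (hn : 0 < n) (v : Fin n → ℝ) : ∑ j, (v j - (∑ i, v i) / n) = 0 := by
  rw [Finset.sum_sub_distrib, Finset.sum_const, Finset.card_univ, Fintype.card_fin,
    nsmul_eq_mul, mul_div_cancel₀ _ (by exact_mod_cast hn.ne' : (n:ℝ) ≠ 0), sub_self]

lemma continuous_Msur (hn : 0 < n) (hc : ∀ i j, 0 ≤ c i j) (hcmax : ∀ i j, c i j ≤ cmax) :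
    Continuous (Msur (n := n) c) := by
  have i0 : Fin n := ⟨0, hn⟩
  have hK : (0:ℝ) ≤ 2 * n * cmax := by
    have := le_trans (hc i0 i0) (hcmax i0 i0); positivity
  apply LipschitzWith.continuous (K := Real.toNNReal (2 * n * cmax))
  apply LipschitzWith.of_dist_le_mul
  intro v v'
  rw [Real.dist_eq, Real.coe_toNNReal _ hK]
  refine le_trans (abs_repoCost_sub_le i0 hc hcmax _ _ (sum_proj hn v) (sum_proj hn v')) ?_
  have hterm : ∀ j, |(v j - (∑ i, v i) / n) - (v' j - (∑ i, v' i) / n)| ≤ 2 * dist v v' := by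
    intro j
    have h1 : |v j - v' j| ≤ dist v v' := by
      rw [← Real.dist_eq]; exact dist_le_pi_dist v v' j
    have h2 : |(∑ i, v i) - ∑ i, v' i| ≤ n * dist v v' := by
      rw [← Finset.sum_sub_distrib]
      refine le_trans (Finset.abs_sum_le_sum_abs _ _) ?_
      have : ∀ i : Fin n, |v i - v' i| ≤ dist v v' := fun i => by
        rw [← Real.dist_eq]; exact dist_le_pi_dist v v' i
      calc ∑ i : Fin n, |v i - v' i| ≤ ∑ _i : Fin n, dist v v' :=
            Finset.sum_le_sum fun i _ => this i
        _ = n * dist v v' := by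
            rw [Finset.sum_const, Finset.card_univ, Fintype.card_fin, nsmul_eq_mul]
    have h3 : |(∑ i, v i) / n - (∑ i, v' i) / n| ≤ dist v v' := by
      rw [div_sub_div_same, abs_div, abs_of_nonneg (by positivity : (0:ℝ) ≤ (n:ℝ))]
      rw [div_le_iff₀ (by exact_mod_cast hn : (0:ℝ) < n)]
      linarith [h2]
    calc |(v j - (∑ i, v i) / n) - (v' j - (∑ i, v' i) / n)|
        = |(v j - v' j) - ((∑ i, v i) / n - (∑ i, v' i) / n)| := by ring_nf
      _ ≤ |v j - v' j| + |(∑ i, v i) / n - (∑ i, v' i) / n| := abs_sub _ _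
      _ ≤ 2 * dist v v' := by linarith
  calc cmax * ∑ j, |(v j - (∑ i, v i) / n) - (v' j - (∑ i, v' i) / n)|
      ≤ cmax * ∑ _j : Fin n, 2 * dist v v' := by
        apply mul_le_mul_of_nonneg_left (Finset.sum_le_sum fun j _ => hterm j)
        exact le_trans (hc i0 i0) (hcmax i0 i0)
    _ = 2 * n * cmax * dist v v' := by
        rw [Finset.sum_const, Finset.card_univ, Fintype.card_fin, nsmul_eq_mul]; ring

/-- Everywhere-continuous surrogate for `Gcost` as a function of `(d, P)`. -/
noncomputable def Fsur (c l : Fin n → Fin n → ℝ) (S : Fin n → ℝ)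
    (p : (Fin n → ℝ) × (Fin n → Fin n → ℝ)) : ℝ :=
  Msur c (vvec S p.1 p.2) - ∑ i, ∑ j, l i j * p.2 i j * min (p.1 i) (S i)

lemma Fsur_eq_Gcost {S dd : Fin n → ℝ} {PP : Fin n → Fin n → ℝ}
    (hP : ∀ i, (∑ j, PP i j) = 1) :
    Fsur c l S (dd, PP) = Gcost c l S dd PP := by
  unfold Fsur Gcost
  rw [Msur_eq (sum_vvec S dd hP)]
  rfl

lemma continuous_Fsur (hn : 0 < n) (hc : ∀ i j, 0 ≤ c i j) (hcmax : ∀ i j, c i j ≤ cmax)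
    (S : Fin n → ℝ) : Continuous (Fsur (n := n) c l S) := by
  apply Continuous.sub
  · apply (continuous_Msur hn hc hcmax).comp
    apply continuous_pi
    intro j
    unfold vvec
    fun_prop
  · fun_prop

end Part2

end Stmt11Aux

namespace Stmt11Aux

section Part3

variable {n : ℕ} {c l : Fin n → Fin n → ℝ} {cmax lmax : ℝ}
variable {S S' dd : Fin n → ℝ} {PP : Fin n → Fin n → ℝ}

lemma min_nonneg' (hS : ∀ i, 0 ≤ S i) (hd : ∀ i, dd i ∈ Set.Icc (0:ℝ) 1) (i : Fin n) :
    0 ≤ min (S i) (dd i) := le_min (hS i) (hd i).1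

lemma sum_min_le (hS : S ∈ stdSimplex ℝ (Fin n)) (dd : Fin n → ℝ) :
    ∑ i, min (S i) (dd i) ≤ 1 := by
  calc ∑ i, min (S i) (dd i) ≤ ∑ i, S i := Finset.sum_le_sum fun i _ => min_le_left _ _
    _ = 1 := hS.2

lemma sum_PP_min (hP : RowStochastic PP) (f : Fin n → ℝ) :
    ∑ j, ∑ i, PP i j * f i = ∑ i, f i := by
  rw [Finset.sum_comm]
  refine Finset.sum_congr rfl fun i _ => ?_
  rw [← Finset.sum_mul, hP.2 i, one_mul]

lemma sum_abs_vvec_le (hS : S ∈ stdSimplex ℝ (Fin n)) (hd : ∀ i, dd i ∈ Set.Icc (0:ℝ) 1)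
    (hP : RowStochastic PP) :
    ∑ j, |vvec S dd PP j| ≤ 2 := by
  have hmin : ∀ i, 0 ≤ min (S i) (dd i) := min_nonneg' hS.1 hd
  have habs : ∀ j, |vvec S dd PP j|
      ≤ min (S j) (dd j) + ∑ i, PP i j * min (S i) (dd i) := by
    intro j
    refine le_trans (abs_sub _ _) ?_
    rw [abs_of_nonneg (hmin j), abs_of_nonneg]
    exact Finset.sum_nonneg fun i _ => mul_nonneg (hP.1 i j).1 (hmin i)
  calc ∑ j, |vvec S dd PP j|
      ≤ ∑ j, (min (S j) (dd j) + ∑ i, PP i j * min (S i) (dd i)) :=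
        Finset.sum_le_sum fun j _ => habs j
    _ = (∑ j, min (S j) (dd j)) + ∑ j, ∑ i, PP i j * min (S i) (dd i) :=
        Finset.sum_add_distrib
    _ = (∑ j, min (S j) (dd j)) + ∑ i, min (S i) (dd i) := by rw [sum_PP_min hP]
    _ ≤ 2 := by linarith [sum_min_le hS dd]

lemma secondterm_nonneg (hl : ∀ i j, 0 ≤ l i j) (hd : ∀ i, dd i ∈ Set.Icc (0:ℝ) 1)
    (hS : ∀ i, 0 ≤ S i) (hP : RowStochastic PP) :
    0 ≤ ∑ i, ∑ j, l i j * PP i j * min (dd i) (S i) :=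
  Finset.sum_nonneg fun i _ => Finset.sum_nonneg fun j _ =>
    mul_nonneg (mul_nonneg (hl i j) (hP.1 i j).1) (le_min (hd i).1 (hS i))

lemma secondterm_le (hlm : 0 ≤ lmax) (hlmax : ∀ i j, l i j ≤ lmax)
    (hS : S ∈ stdSimplex ℝ (Fin n)) (hd : ∀ i, dd i ∈ Set.Icc (0:ℝ) 1)
    (hP : RowStochastic PP) :
    ∑ i, ∑ j, l i j * PP i j * min (dd i) (S i) ≤ lmax := by
  have hmin : ∀ i, 0 ≤ min (dd i) (S i) := fun i => le_min (hd i).1 (hS.1 i)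
  have step : ∀ i, ∑ j, l i j * PP i j * min (dd i) (S i) ≤ lmax * min (dd i) (S i) := by
    intro i
    calc ∑ j, l i j * PP i j * min (dd i) (S i)
        ≤ ∑ j, lmax * PP i j * min (dd i) (S i) := by
          refine Finset.sum_le_sum fun j _ => ?_
          exact mul_le_mul_of_nonneg_right
            (mul_le_mul_of_nonneg_right (hlmax i j) (hP.1 i j).1) (hmin i)
      _ = lmax * min (dd i) (S i) := by
          simp_rw [mul_assoc, ← Finset.mul_sum]
          rw [← Finset.sum_mul, hP.2 i, one_mul]
  have hsum : ∑ i, min (dd i) (S i) ≤ 1 := by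
    have : ∀ i, min (dd i) (S i) = min (S i) (dd i) := fun i => min_comm _ _
    simp_rw [this]
    exact sum_min_le hS dd
  calc ∑ i, ∑ j, l i j * PP i j * min (dd i) (S i)
      ≤ ∑ i, lmax * min (dd i) (S i) := Finset.sum_le_sum fun i _ => step i
    _ = lmax * ∑ i, min (dd i) (S i) := by rw [Finset.mul_sum]
    _ ≤ lmax * 1 := mul_le_mul_of_nonneg_left hsum hlm
    _ = lmax := mul_one lmax

/-- Pointwise bounds for `Gcost`. -/
lemma Gcost_mem_Icc (hn : 0 < n) (hc : ∀ i j, 0 ≤ c i j) (hl : ∀ i j, 0 ≤ l i j)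
    (hcmax : ∀ i j, c i j ≤ cmax) (hlm : 0 ≤ lmax) (hlmax : ∀ i j, l i j ≤ lmax)
    (hS : S ∈ stdSimplex ℝ (Fin n)) (hd : ∀ i, dd i ∈ Set.Icc (0:ℝ) 1)
    (hP : RowStochastic PP) :
    Gcost c l S dd PP ∈ Set.Icc (-lmax) (2 * cmax) := by
  have hcm : 0 ≤ cmax := le_trans (hc ⟨0, hn⟩ ⟨0, hn⟩) (hcmax ⟨0, hn⟩ ⟨0, hn⟩)
  have h1 : repoCost c (vvec S dd PP) ≤ 2 * cmax := by
    refine le_trans (repoCost_le_star ⟨0, hn⟩ hc hcmax _ (sum_vvec S dd hP.2)) ?_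
    have := sum_abs_vvec_le hS hd hP
    nlinarith
  have h2 := repoCost_nonneg hc (vvec S dd PP)
  have h3 := secondterm_nonneg (S := S) (dd := dd) hl hd hS.1 hP
  have h4 := secondterm_le (S := S) (dd := dd) hlm hlmax hS hd hP
  constructor
  · show -lmax ≤ repoCost c (vvec S dd PP) - _
    linarith
  · show repoCost c (vvec S dd PP) - _ ≤ 2 * cmax
    linarith

/-- Lipschitz continuity of `Gcost` in `S` (w.r.t. the ℓ¹ norm). -/
lemma Gcost_lip (hn : 0 < n) (hc : ∀ i j, 0 ≤ c i j)
    (hcmax : ∀ i j, c i j ≤ cmax) (hlm : 0 ≤ lmax) (hlmax : ∀ i j, l i j ≤ lmax)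
    (hl : ∀ i j, 0 ≤ l i j) (hP : RowStochastic PP) :
    |Gcost c l S dd PP - Gcost c l S' dd PP| ≤ (2 * cmax + lmax) * ∑ i, |S i - S' i| := by
  have hcm : 0 ≤ cmax := le_trans (hc ⟨0, hn⟩ ⟨0, hn⟩) (hcmax ⟨0, hn⟩ ⟨0, hn⟩)
  have hΔ : ∀ i, |min (S i) (dd i) - min (S' i) (dd i)| ≤ |S i - S' i| :=
    fun i => abs_min_sub_min _ _ _
  -- repoCost part
  have hrepo : |repoCost c (vvec S dd PP) - repoCost c (vvec S' dd PP)|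
      ≤ cmax * (2 * ∑ i, |S i - S' i|) := by
    refine le_trans (abs_repoCost_sub_le ⟨0, hn⟩ hc hcmax _ _
      (sum_vvec S dd hP.2) (sum_vvec S' dd hP.2)) ?_
    have hterm : ∀ j, |vvec S dd PP j - vvec S' dd PP j|
        ≤ |min (S j) (dd j) - min (S' j) (dd j)|
          + ∑ i, PP i j * |min (S i) (dd i) - min (S' i) (dd i)| := by
      intro j
      unfold vvec
      have hs : ∑ i, PP i j * (min (S i) (dd i) - min (S' i) (dd i))
          = (∑ i, PP i j * min (S i) (dd i)) - ∑ i, PP i j * min (S' i) (dd i) := by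
        simp_rw [mul_sub]
        exact Finset.sum_sub_distrib _ _
      have : (min (S j) (dd j) - ∑ i, PP i j * min (S i) (dd i))
          - (min (S' j) (dd j) - ∑ i, PP i j * min (S' i) (dd i))
          = (min (S j) (dd j) - min (S' j) (dd j))
            - ∑ i, PP i j * (min (S i) (dd i) - min (S' i) (dd i)) := by
        rw [hs]; ring
      rw [this]
      refine le_trans (abs_sub _ _) ?_
      gcongr
      refine le_trans (Finset.abs_sum_le_sum_abs _ _) ?_
      refine Finset.sum_le_sum fun i _ => ?_
      rw [abs_mul, abs_of_nonneg (hP.1 i j).1]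
    have hsum : ∑ j, |vvec S dd PP j - vvec S' dd PP j| ≤ 2 * ∑ i, |S i - S' i| := by
      calc ∑ j, |vvec S dd PP j - vvec S' dd PP j|
          ≤ ∑ j, (|min (S j) (dd j) - min (S' j) (dd j)|
            + ∑ i, PP i j * |min (S i) (dd i) - min (S' i) (dd i)|) :=
            Finset.sum_le_sum fun j _ => hterm j
        _ = (∑ j, |min (S j) (dd j) - min (S' j) (dd j)|)
            + ∑ i, |min (S i) (dd i) - min (S' i) (dd i)| := by
            rw [Finset.sum_add_distrib, sum_PP_min hP]
        _ ≤ (∑ i, |S i - S' i|) + ∑ i, |S i - S' i| :=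
            add_le_add (Finset.sum_le_sum fun j _ => hΔ j)
              (Finset.sum_le_sum fun i _ => hΔ i)
        _ = 2 * ∑ i, |S i - S' i| := by ring
    exact mul_le_mul_of_nonneg_left hsum hcm
  -- second part
  have hsec : |(∑ i, ∑ j, l i j * PP i j * min (dd i) (S i))
      - ∑ i, ∑ j, l i j * PP i j * min (dd i) (S' i)|
      ≤ lmax * ∑ i, |S i - S' i| := by
    have key : ∀ i, |∑ j, (l i j * PP i j * min (dd i) (S i)
        - l i j * PP i j * min (dd i) (S' i))| ≤ lmax * |S i - S' i| := by
      intro i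
      have hΔi : |min (dd i) (S i) - min (dd i) (S' i)| ≤ |S i - S' i| := by
        rw [min_comm (dd i) (S i), min_comm (dd i) (S' i)]
        exact abs_min_sub_min _ _ _
      refine le_trans (Finset.abs_sum_le_sum_abs _ _) ?_
      have step : ∀ j, |l i j * PP i j * min (dd i) (S i)
          - l i j * PP i j * min (dd i) (S' i)| ≤ lmax * PP i j * |S i - S' i| := by
        intro j
        have : l i j * PP i j * min (dd i) (S i) - l i j * PP i j * min (dd i) (S' i)
            = l i j * PP i j * (min (dd i) (S i) - min (dd i) (S' i)) := by ring
        rw [this, abs_mul, abs_mul, abs_of_nonneg (hl i j), abs_of_nonneg (hP.1 i j).1]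
        calc l i j * PP i j * |min (dd i) (S i) - min (dd i) (S' i)|
            ≤ l i j * PP i j * |S i - S' i| :=
              mul_le_mul_of_nonneg_left hΔi (mul_nonneg (hl i j) (hP.1 i j).1)
          _ ≤ lmax * PP i j * |S i - S' i| :=
              mul_le_mul_of_nonneg_right
                (mul_le_mul_of_nonneg_right (hlmax i j) (hP.1 i j).1)
                (abs_nonneg _)
      calc ∑ j, |l i j * PP i j * min (dd i) (S i) - l i j * PP i j * min (dd i) (S' i)|
          ≤ ∑ j, lmax * PP i j * |S i - S' i| := Finset.sum_le_sum fun j _ => step j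
        _ = lmax * |S i - S' i| := by
            have hsum : lmax * (∑ j, PP i j) * |S i - S' i|
                = ∑ j, lmax * PP i j * |S i - S' i| := by
              rw [Finset.mul_sum, Finset.sum_mul]
            rw [← hsum, hP.2 i, mul_one]
    calc |(∑ i, ∑ j, l i j * PP i j * min (dd i) (S i))
        - ∑ i, ∑ j, l i j * PP i j * min (dd i) (S' i)|
        = |∑ i, ∑ j, (l i j * PP i j * min (dd i) (S i)
            - l i j * PP i j * min (dd i) (S' i))| := by
          rw [← Finset.sum_sub_distrib]
          congr 1
          exact Finset.sum_congr rfl fun i _ => (Finset.sum_sub_distrib _ _).symm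
      _ ≤ ∑ i, |∑ j, (l i j * PP i j * min (dd i) (S i)
            - l i j * PP i j * min (dd i) (S' i))| := Finset.abs_sum_le_sum_abs _ _
      _ ≤ ∑ i, lmax * |S i - S' i| := Finset.sum_le_sum fun i _ => key i
      _ = lmax * ∑ i, |S i - S' i| := by rw [Finset.mul_sum]
  unfold Gcost
  have expand : repoCost c (vvec S dd PP) - (∑ i, ∑ j, l i j * PP i j * min (dd i) (S i))
      - (repoCost c (vvec S' dd PP) - ∑ i, ∑ j, l i j * PP i j * min (dd i) (S' i))
      = (repoCost c (vvec S dd PP) - repoCost c (vvec S' dd PP))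
        - ((∑ i, ∑ j, l i j * PP i j * min (dd i) (S i))
          - ∑ i, ∑ j, l i j * PP i j * min (dd i) (S' i)) := by ring
  show |repoCost c (vvec S dd PP) - _ - (repoCost c (vvec S' dd PP) - _)| ≤ _
  rw [expand]
  refine le_trans (abs_sub _ _) ?_
  nlinarith [hrepo, hsec]

end Part3

end Stmt11Aux

namespace Stmt11Aux

section Hoeffding

open Real

variable {Ω : Type*} [MeasurableSpace Ω] {μ : Measure Ω} [IsProbabilityMeasure μ]

lemma integrable_of_abs_bound {f : Ω → ℝ} (hf : AEStronglyMeasurable f μ) (C : ℝ)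
    (h : ∀ ω, |f ω| ≤ C) : Integrable f μ :=
  (integrable_const C).mono' hf
    (Filter.Eventually.of_forall (by simpa [Real.norm_eq_abs] using h))

/-- Hoeffding-type bound on the mgf of a centered bounded random variable
(with the suboptimal constant `M²/2` in place of `M²/8` for the variance proxy). -/
lemma mgf_le_of_abs_le {X : Ω → ℝ} (hX : Measurable X) {M : ℝ} (hM : 0 < M)
    (hbdd : ∀ ω, |X ω| ≤ M) (hmean : ∫ ω, X ω ∂μ = 0) (s : ℝ) :
    mgf X μ s ≤ Real.exp (s ^ 2 * M ^ 2 / 2) := by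
  have hXint : Integrable X μ := integrable_of_abs_bound hX.aestronglyMeasurable M hbdd
  have key : ∀ ω, Real.exp (s * X ω)
      ≤ (M - X ω) / (2 * M) * Real.exp (s * -M) + (M + X ω) / (2 * M) * Real.exp (s * M) := by
    intro ω
    have h1 : -M ≤ X ω := (abs_le.mp (hbdd ω)).1
    have h2 : X ω ≤ M := (abs_le.mp (hbdd ω)).2
    have ha : 0 ≤ (M - X ω) / (2 * M) := div_nonneg (by linarith) (by linarith)
    have hb : 0 ≤ (M + X ω) / (2 * M) := div_nonneg (by linarith) (by linarith)
    have hab : (M - X ω) / (2 * M) + (M + X ω) / (2 * M) = 1 := by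
      field_simp; ring
    have := convexOn_exp.2 (Set.mem_univ (s * -M)) (Set.mem_univ (s * M)) ha hb hab
    simp only [smul_eq_mul] at this
    have harg : (M - X ω) / (2 * M) * (s * -M) + (M + X ω) / (2 * M) * (s * M) = s * X ω := by
      field_simp; ring
    rwa [harg] at this
  have hint1 : Integrable (fun ω => Real.exp (s * X ω)) μ := by
    apply integrable_of_abs_bound ((hX.const_mul s).exp).aestronglyMeasurable
      (Real.exp (|s| * M))
    intro ω
    rw [abs_of_nonneg (Real.exp_nonneg _), Real.exp_le_exp]
    calc s * X ω ≤ |s * X ω| := le_abs_self _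
      _ = |s| * |X ω| := abs_mul _ _
      _ ≤ |s| * M := mul_le_mul_of_nonneg_left (hbdd ω) (abs_nonneg s)
  have hint2 : Integrable
      (fun ω => (M - X ω) / (2 * M) * Real.exp (s * -M)
        + (M + X ω) / (2 * M) * Real.exp (s * M)) μ := by
    apply Integrable.add
    · exact (((integrable_const M).sub hXint).div_const _).mul_const _
    · exact (((integrable_const M).add hXint).div_const _).mul_const _
  have hmgf : mgf X μ s ≤ Real.cosh (s * M) := by
    have hle : mgf X μ s
        ≤ ∫ ω, ((M - X ω) / (2 * M) * Real.exp (s * -M)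
            + (M + X ω) / (2 * M) * Real.exp (s * M)) ∂μ :=
      integral_mono hint1 hint2 key
    have hval : ∫ ω, ((M - X ω) / (2 * M) * Real.exp (s * -M)
        + (M + X ω) / (2 * M) * Real.exp (s * M)) ∂μ = Real.cosh (s * M) := by
      have hrw : ∀ ω, (M - X ω) / (2 * M) * Real.exp (s * -M)
          + (M + X ω) / (2 * M) * Real.exp (s * M)
          = ((Real.exp (s * M) - Real.exp (s * -M)) / (2 * M)) * X ω
            + (Real.exp (s * -M) + Real.exp (s * M)) / 2 := by
        intro ω; field_simp; ring
      simp_rw [hrw]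
      rw [integral_add (hXint.const_mul _) (integrable_const _), integral_const_mul,
        hmean, integral_const]
      simp only [probReal_univ, smul_eq_mul, one_mul, mul_zero, zero_add]
      rw [Real.cosh_eq, show s * -M = -(s * M) by ring]
      ring
    calc mgf X μ s ≤ _ := hle
      _ = Real.cosh (s * M) := hval
  calc mgf X μ s ≤ Real.cosh (s * M) := hmgf
    _ ≤ Real.exp ((s * M) ^ 2 / 2) := Real.cosh_le_exp_half_sq _
    _ = Real.exp (s ^ 2 * M ^ 2 / 2) := by rw [mul_pow]

/-- One-sided Hoeffding tail bound for sums of independent centered bounded rvs. -/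
lemma hoeffding_one_side {m : ℕ} (hm : 0 < m) (X : Fin m → Ω → ℝ)
    (hmeas : ∀ i, Measurable (X i))
    (hindep : iIndepFun X μ)
    {M : ℝ} (hM : 0 < M) (hbdd : ∀ i ω, |X i ω| ≤ M) (hmean : ∀ i, ∫ ω, X i ω ∂μ = 0)
    {ε : ℝ} (hε : 0 ≤ ε) :
    (μ {ω | ε ≤ ∑ i, X i ω}).toReal ≤ Real.exp (-(ε ^ 2) / (2 * m * M ^ 2)) := by
  set s : ℝ := ε / (m * M ^ 2) with hs
  have hs0 : 0 ≤ s := by positivity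
  have hinti : ∀ i ∈ Finset.univ, Integrable (fun ω => Real.exp (s * X i ω)) μ := by
    intro i _
    apply integrable_of_abs_bound (((hmeas i).const_mul s).exp).aestronglyMeasurable
      (Real.exp (|s| * M))
    intro ω
    rw [abs_of_nonneg (Real.exp_nonneg _), Real.exp_le_exp]
    calc s * X i ω ≤ |s * X i ω| := le_abs_self _
      _ = |s| * |X i ω| := abs_mul _ _
      _ ≤ |s| * M := mul_le_mul_of_nonneg_left (hbdd i ω) (abs_nonneg s)
  have hint : Integrable (fun ω => Real.exp (s * (∑ i, X i) ω)) μ :=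
    hindep.integrable_exp_mul_sum hmeas hinti
  have hset : {ω | ε ≤ ∑ i, X i ω} = {ω | ε ≤ (∑ i, X i) ω} := by
    ext ω; simp [Finset.sum_apply]
  rw [hset]
  refine le_trans (measure_ge_le_exp_mul_mgf ε hs0 hint) ?_
  have hmgf : mgf (∑ i, X i) μ s ≤ Real.exp (m * (s ^ 2 * M ^ 2 / 2)) := by
    rw [hindep.mgf_sum hmeas]
    calc ∏ i : Fin m, mgf (X i) μ s
        ≤ ∏ _i : Fin m, Real.exp (s ^ 2 * M ^ 2 / 2) := by
          apply Finset.prod_le_prod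
          · intro i _; exact mgf_nonneg
          · intro i _; exact mgf_le_of_abs_le (hmeas i) hM (hbdd i) (hmean i) s
      _ = Real.exp (m * (s ^ 2 * M ^ 2 / 2)) := by
          rw [Finset.prod_const, Finset.card_univ, Fintype.card_fin, ← Real.exp_nat_mul]
  calc Real.exp (-s * ε) * mgf (∑ i, X i) μ s
      ≤ Real.exp (-s * ε) * Real.exp (m * (s ^ 2 * M ^ 2 / 2)) :=
        mul_le_mul_of_nonneg_left hmgf (Real.exp_nonneg _)
    _ = Real.exp (-s * ε + m * (s ^ 2 * M ^ 2 / 2)) := (Real.exp_add _ _).symm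
    _ ≤ Real.exp (-(ε ^ 2) / (2 * m * M ^ 2)) := by
        rw [Real.exp_le_exp, hs]
        have hm' : (0:ℝ) < m := by exact_mod_cast hm
        have hM2 : (0:ℝ) < M ^ 2 := by positivity
        rw [div_pow]
        field_simp
        nlinarith [sq_nonneg ε, sq_nonneg M, hm', hM2]

/-- Two-sided Hoeffding bound. -/
lemma hoeffding_abs {m : ℕ} (hm : 0 < m) (X : Fin m → Ω → ℝ)
    (hmeas : ∀ i, Measurable (X i))
    (hindep : iIndepFun X μ)
    {M : ℝ} (hM : 0 < M) (hbdd : ∀ i ω, |X i ω| ≤ M) (hmean : ∀ i, ∫ ω, X i ω ∂μ = 0)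
    {ε : ℝ} (hε : 0 ≤ ε) :
    μ {ω | ε < |∑ i, X i ω|} ≤ ENNReal.ofReal (2 * Real.exp (-(ε ^ 2) / (2 * m * M ^ 2))) := by
  have hsub : {ω | ε < |∑ i, X i ω|}
      ⊆ {ω | ε ≤ ∑ i, X i ω} ∪ {ω | ε ≤ ∑ i, (-X i) ω} := by
    intro ω hω
    simp only [Set.mem_setOf_eq] at hω
    rcases lt_abs.mp hω with h | h
    · exact Or.inl h.le
    · refine Or.inr ?_
      have hneg : ∑ i, (-X i) ω = -∑ i, X i ω := by simp [Pi.neg_apply]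
      show ε ≤ ∑ i, (-X i) ω
      rw [hneg]
      linarith
  have hneg : iIndepFun (fun i => -X i) μ :=
    hindep.comp (fun i => fun x : ℝ => -x) (fun i => measurable_neg)
  have h1 := hoeffding_one_side hm X hmeas hindep hM hbdd hmean hε
  have h2 := hoeffding_one_side hm (fun i => -X i) (fun i => (hmeas i).neg) hneg hM
    (fun i ω => by simpa [abs_neg] using hbdd i ω)
    (fun i => by simp [integral_neg, hmean i]) hε
  have hne1 : μ {ω | ε ≤ ∑ i, X i ω} ≠ ⊤ := measure_ne_top μ _
  have hne2 : μ {ω | ε ≤ ∑ i, (-X i) ω} ≠ ⊤ := measure_ne_top μ _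
  calc μ {ω | ε < |∑ i, X i ω|}
      ≤ μ ({ω | ε ≤ ∑ i, X i ω} ∪ {ω | ε ≤ ∑ i, (-X i) ω}) := measure_mono hsub
    _ ≤ μ {ω | ε ≤ ∑ i, X i ω} + μ {ω | ε ≤ ∑ i, (-X i) ω} := measure_union_le _ _
    _ ≤ ENNReal.ofReal (Real.exp (-(ε ^ 2) / (2 * m * M ^ 2)))
        + ENNReal.ofReal (Real.exp (-(ε ^ 2) / (2 * m * M ^ 2))) := by
        gcongr
        · rw [← ENNReal.ofReal_toReal hne1]
          exact ENNReal.ofReal_le_ofReal h1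
        · rw [← ENNReal.ofReal_toReal hne2]
          exact ENNReal.ofReal_le_ofReal h2
    _ = ENNReal.ofReal (2 * Real.exp (-(ε ^ 2) / (2 * m * M ^ 2))) := by
        rw [← ENNReal.ofReal_add (Real.exp_nonneg _) (Real.exp_nonneg _)]
        · congr 1; ring
 
end Hoeffding

end Stmt11Aux

namespace Stmt11Aux

section Covering

variable {n : ℕ}

/-- Grid point in the simplex indexed by `k : Fin n → Fin (m+1)`. -/
noncomputable def gridPt (hn : 0 < n) (m : ℕ) (k : Fin n → Fin (m + 1)) : Fin n → ℝ :=
  if (∑ i, (k i : ℕ)) ≤ m then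
    fun i => (k i : ℝ) / m + if i = ⟨0, hn⟩ then ((m : ℝ) - ∑ i, ((k i : ℕ) : ℝ)) / m else 0
  else fun i => if i = ⟨0, hn⟩ then 1 else 0

lemma gridPt_mem (hn : 0 < n) {m : ℕ} (hm : 0 < m) (k : Fin n → Fin (m + 1)) :
    gridPt hn m k ∈ stdSimplex ℝ (Fin n) := by
  have hm' : (0:ℝ) < m := by exact_mod_cast hm
  unfold gridPt
  split_ifs with h
  · have hks : ((∑ i, (k i : ℕ) : ℕ) : ℝ) ≤ m := by exact_mod_cast h
    rw [Nat.cast_sum] at hks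
    constructor
    · intro i
      apply add_nonneg (by positivity)
      split_ifs
      · apply div_nonneg (by linarith) hm'.le
      · exact le_rfl
    · rw [Finset.sum_add_distrib]
      rw [Finset.sum_ite_eq' Finset.univ (⟨0, hn⟩ : Fin n)
        (fun _ => ((m : ℝ) - ∑ i, ((k i : ℕ) : ℝ)) / m)]
      simp only [Finset.mem_univ, if_true]
      rw [← Finset.sum_div]
      field_simp
      ring
  · constructor
    · intro i; dsimp only; split_ifs <;> norm_num
    · rw [Finset.sum_ite_eq' Finset.univ (⟨0, hn⟩ : Fin n) (fun _ => (1:ℝ))]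
      simp

/-- The rounding map from the simplex to the grid. -/
noncomputable def roundPt (m : ℕ) (S : Fin n → ℝ) (hS : S ∈ stdSimplex ℝ (Fin n)) :
    Fin n → Fin (m + 1) :=
  fun i => ⟨min (Nat.floor ((m : ℝ) * S i)) m, Nat.lt_succ_of_le (min_le_right _ _)⟩

lemma coord_le_one {S : Fin n → ℝ} (hS : S ∈ stdSimplex ℝ (Fin n)) (i : Fin n) : S i ≤ 1 := by
  rw [← hS.2]
  exact Finset.single_le_sum (fun j _ => hS.1 j) (Finset.mem_univ i)

lemma roundPt_val {m : ℕ} (S : Fin n → ℝ) (hS : S ∈ stdSimplex ℝ (Fin n)) (i : Fin n) :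
    ((roundPt m S hS i : ℕ)) = Nat.floor ((m : ℝ) * S i) := by
  unfold roundPt
  simp only
  rw [min_eq_left]
  apply Nat.floor_le_of_le
  calc (m : ℝ) * S i ≤ (m : ℝ) * 1 := by
        apply mul_le_mul_of_nonneg_left (coord_le_one hS i) (by positivity)
    _ = m := mul_one _

lemma gridPt_approx (hn : 0 < n) {m : ℕ} (hm : 0 < m)
    {S : Fin n → ℝ} (hS : S ∈ stdSimplex ℝ (Fin n)) :
    ∑ i, |S i - gridPt hn m (roundPt m S hS) i| ≤ 2 * n / m := by
  have hm' : (0:ℝ) < m := by exact_mod_cast hm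
  set k := roundPt m S hS with hk
  have hkv : ∀ i, ((k i : ℕ) : ℝ) = Nat.floor ((m : ℝ) * S i) := by
    intro i; exact_mod_cast congrArg (Nat.cast (R := ℝ)) (roundPt_val S hS i)
  have hfl : ∀ i, ((k i : ℕ) : ℝ) ≤ (m : ℝ) * S i := by
    intro i
    rw [hkv i]
    exact Nat.floor_le (mul_nonneg (by positivity) (hS.1 i))
  have hfl2 : ∀ i, (m : ℝ) * S i < ((k i : ℕ) : ℝ) + 1 := by
    intro i
    rw [hkv i]
    exact Nat.lt_floor_add_one _
  have hsumk : (∑ i, (k i : ℕ)) ≤ m := by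
    have : ((∑ i, (k i : ℕ) : ℕ) : ℝ) ≤ (m : ℝ) := by
      rw [Nat.cast_sum]
      calc ∑ i, ((k i : ℕ) : ℝ) ≤ ∑ i, (m : ℝ) * S i := Finset.sum_le_sum fun i _ => hfl i
        _ = (m : ℝ) * ∑ i, S i := by rw [Finset.mul_sum]
        _ = m := by rw [hS.2, mul_one]
    exact_mod_cast this
  have hd1 : ∀ i, ((k i : ℕ) : ℝ) / m ≤ S i := by
    intro i; rw [div_le_iff₀ hm']; linarith [hfl i]
  have hd2 : ∀ i, S i - ((k i : ℕ) : ℝ) / m ≤ 1 / m := by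
    intro i
    have h2 : S i ≤ (((k i : ℕ) : ℝ) + 1) / m := by
      rw [le_div_iff₀ hm']; linarith [hfl2 i]
    have h3 : (((k i : ℕ) : ℝ) + 1) / m - ((k i : ℕ) : ℝ) / m = 1 / m := by ring
    linarith
  have hδ0 : 0 ≤ ((m : ℝ) - ∑ i, ((k i : ℕ) : ℝ)) / m := by
    apply div_nonneg _ hm'.le
    have : ((∑ i, (k i : ℕ) : ℕ) : ℝ) ≤ m := by exact_mod_cast hsumk
    rw [Nat.cast_sum] at this
    linarith
  have hδn : ((m : ℝ) - ∑ i, ((k i : ℕ) : ℝ)) / m ≤ n / m := by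
    have hnum : (m : ℝ) - ∑ i, ((k i : ℕ) : ℝ) ≤ n := by
      have hms : (m : ℝ) = ∑ i, (m : ℝ) * S i := by rw [← Finset.mul_sum, hS.2, mul_one]
      rw [hms, ← Finset.sum_sub_distrib]
      calc ∑ i, ((m : ℝ) * S i - ((k i : ℕ) : ℝ)) ≤ ∑ _i : Fin n, (1:ℝ) :=
            Finset.sum_le_sum fun i _ => by linarith [hfl2 i]
        _ = n := by simp
    gcongr
  have hg : gridPt hn m k = fun i => ((k i : ℕ) : ℝ) / m
      + if i = ⟨0, hn⟩ then ((m : ℝ) - ∑ i, ((k i : ℕ) : ℝ)) / m else 0 := by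
    unfold gridPt
    rw [if_pos hsumk]
  rw [hg]
  have hcoord : ∀ i, |S i - (((k i : ℕ) : ℝ) / m
      + if i = ⟨0, hn⟩ then ((m : ℝ) - ∑ i, ((k i : ℕ) : ℝ)) / m else 0)|
      ≤ 1 / m + (if i = ⟨0, hn⟩ then (n : ℝ) / m else 0) := by
    intro i
    have h1m : (0:ℝ) ≤ 1 / m := by positivity
    have hnm : (0:ℝ) ≤ (n:ℝ) / m := le_trans hδ0 hδn
    split_ifs with h
    · rw [abs_le]
      exact ⟨by linarith [hd1 i, hδ0, hδn], by linarith [hd2 i, hδ0]⟩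
    · rw [add_zero, add_zero, abs_le]
      exact ⟨by linarith [hd1 i], by linarith [hd2 i]⟩
  calc ∑ i, |S i - (((k i : ℕ) : ℝ) / m
      + if i = ⟨0, hn⟩ then ((m : ℝ) - ∑ i, ((k i : ℕ) : ℝ)) / m else 0)|
      ≤ ∑ i, (1 / m + if i = ⟨0, hn⟩ then (n : ℝ) / m else 0) :=
        Finset.sum_le_sum fun i _ => hcoord i
    _ = n * (1 / m) + (n : ℝ) / m := by
        rw [Finset.sum_add_distrib, Finset.sum_const, Finset.card_univ, Fintype.card_fin,
          Finset.sum_ite_eq' Finset.univ (⟨0, hn⟩ : Fin n) (fun _ => (n : ℝ) / m)]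
        simp [nsmul_eq_mul]
    _ = 2 * n / m := by ring

end Covering

end Stmt11Aux

namespace Stmt11Aux

section Numeric

lemma logT_ge {T : ℕ} (hT : 2 ≤ T) : (0.69 : ℝ) ≤ Real.log T := by
  have h2 : Real.log 2 ≤ Real.log T := by
    apply Real.log_le_log (by norm_num)
    exact_mod_cast hT
  linarith [Real.log_two_gt_d9]

lemma logT_nonneg {T : ℕ} (hT : 2 ≤ T) : (0 : ℝ) ≤ Real.log T := by
  linarith [logT_ge hT]

lemma Kbound {n T : ℕ} (hn : 1 ≤ n) (hT : 2 ≤ T) :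
    (n:ℝ) * Real.log ((n:ℝ) * T + 1) + 2 * Real.log T + 1 ≤ 8 * (n:ℝ)^2 * Real.log T := by
  have hn' : (1:ℝ) ≤ n := by exact_mod_cast hn
  have hT' : (2:ℝ) ≤ T := by exact_mod_cast hT
  have hnT : (1:ℝ) ≤ (n:ℝ) * T := by nlinarith
  have hlog1 : Real.log ((n:ℝ) * T + 1) ≤ Real.log (2 * ((n:ℝ) * T)) := by
    apply Real.log_le_log (by linarith)
    linarith
  have hlog2 : Real.log (2 * ((n:ℝ) * T)) = Real.log 2 + Real.log n + Real.log T := by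
    rw [Real.log_mul (by norm_num) (by nlinarith), Real.log_mul (by linarith) (by linarith)]
    ring
  have hlogn : Real.log n ≤ (n:ℝ) - 1 := by
    have := Real.add_one_le_exp (Real.log n)
    have h := Real.log_le_sub_one_of_pos (show (0:ℝ) < n by linarith)
    linarith
  have hlog2' : Real.log 2 ≤ 1 := by
    have := Real.log_le_sub_one_of_pos (show (0:ℝ) < 2 by norm_num)
    linarith
  have hL : (0.69 : ℝ) ≤ Real.log T := logT_ge hT
  have hstep : (n:ℝ) * Real.log ((n:ℝ) * T + 1)
      ≤ (n:ℝ) * (1 + ((n:ℝ) - 1) + Real.log T) := by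
    apply mul_le_mul_of_nonneg_left _ (by linarith)
    calc Real.log ((n:ℝ) * T + 1) ≤ Real.log 2 + Real.log n + Real.log T := by
          rw [← hlog2]; exact hlog1
      _ ≤ 1 + ((n:ℝ) - 1) + Real.log T := by linarith
  have hsq : (n:ℝ) ≤ (n:ℝ)^2 := by nlinarith
  nlinarith [mul_nonneg (show (0:ℝ) ≤ Real.log T - 0.69 by linarith)
      (show (0:ℝ) ≤ (n:ℝ)^2 - 1 by nlinarith),
    mul_nonneg (show (0:ℝ) ≤ Real.log T - 0.69 by linarith)
      (show (0:ℝ) ≤ (n:ℝ)^2 by positivity),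
    mul_le_mul_of_nonneg_right hsq (show (0:ℝ) ≤ Real.log T by linarith)]

lemma count_bound {n T : ℕ} (hn : 1 ≤ n) (hT : 2 ≤ T) :
    ((n * T + 1 : ℕ)^n : ℝ)
      * (2 * Real.exp (-((n:ℝ) * Real.log ((n:ℝ) * T + 1) + 2 * Real.log T + 1)))
      ≤ 3 / (T:ℝ)^2 := by
  have hT' : (2:ℝ) ≤ T := by exact_mod_cast hT
  have hn' : (1:ℝ) ≤ n := by exact_mod_cast hn
  have hpos : (0:ℝ) < (n:ℝ) * T + 1 := by nlinarith
  have hc : ((n * T + 1 : ℕ) : ℝ) = (n:ℝ) * T + 1 := by push_cast; ring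
  have e1 : Real.exp ((n:ℝ) * Real.log ((n:ℝ) * T + 1)) = ((n:ℝ) * T + 1)^n := by
    rw [Real.exp_nat_mul, Real.exp_log hpos]
  have e2 : Real.exp (2 * Real.log T) = (T:ℝ)^2 := by
    rw [show (2:ℝ) * Real.log T = ((2:ℕ):ℝ) * Real.log T by norm_num,
      Real.exp_nat_mul, Real.exp_log (by linarith)]
  have hexp : Real.exp (-((n:ℝ) * Real.log ((n:ℝ) * T + 1) + 2 * Real.log T + 1))
      = (((n:ℝ) * T + 1)^n)⁻¹ * ((T:ℝ)^2)⁻¹ * Real.exp (-1) := by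
    rw [show -((n:ℝ) * Real.log ((n:ℝ) * T + 1) + 2 * Real.log T + 1)
        = -((n:ℝ) * Real.log ((n:ℝ) * T + 1)) + -(2 * Real.log T) + (-1) by ring,
      Real.exp_add, Real.exp_add, Real.exp_neg, Real.exp_neg, e1, e2]
  rw [hexp]
  have hcast : ((n * T + 1 : ℕ)^n : ℝ) = ((n:ℝ) * T + 1)^n := by
    push_cast
    try ring
  rw [hcast]
  have hppos : (0:ℝ) < ((n:ℝ) * T + 1)^n := by positivity
  have hT2 : (0:ℝ) < (T:ℝ)^2 := by positivity
  have hee : Real.exp (-1 : ℝ) ≤ 1 := by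
    rw [show (1:ℝ) = Real.exp 0 by simp]
    exact Real.exp_le_exp.mpr (by norm_num)
  have hsimp : ((n:ℝ) * T + 1)^n * (2 * ((((n:ℝ) * T + 1)^n)⁻¹ * ((T:ℝ)^2)⁻¹
      * Real.exp (-1))) = 2 * Real.exp (-1) / (T:ℝ)^2 := by
    field_simp
  rw [hsimp]
  gcongr
  nlinarith [Real.exp_pos (-1 : ℝ)]

lemma sqrt_term_bound {n T t : ℕ} (hn : 1 ≤ n) (hT : 2 ≤ T) (ht : 1 ≤ t) :
    Real.sqrt (8 * ((n:ℝ) * Real.log ((n:ℝ) * T + 1) + 2 * Real.log T + 1) / t)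
      ≤ 8 * (n:ℝ)^3 * Real.sqrt (Real.log T) / Real.sqrt t := by
  have ht' : (0:ℝ) < t := by exact_mod_cast ht
  have hL0 : (0:ℝ) ≤ Real.log T := logT_nonneg hT
  have hn' : (1:ℝ) ≤ n := by exact_mod_cast hn
  have hK := Kbound hn hT
  have hn6 : (n:ℝ)^2 ≤ (n:ℝ)^6 := by nlinarith [sq_nonneg ((n:ℝ)^2 - 1), sq_nonneg (n:ℝ)]
  have h1 : 8 * ((n:ℝ) * Real.log ((n:ℝ) * T + 1) + 2 * Real.log T + 1) / t
      ≤ 64 * (n:ℝ)^6 * Real.log T / t := by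
    rw [div_eq_mul_inv, div_eq_mul_inv]
    apply mul_le_mul_of_nonneg_right _ (inv_nonneg.mpr ht'.le)
    nlinarith [mul_le_mul_of_nonneg_right hn6 hL0]
  have heq : (8 * (n:ℝ)^3 * Real.sqrt (Real.log T) / Real.sqrt t)^2
      = 64 * (n:ℝ)^6 * Real.log T / t := by
    rw [div_pow, mul_pow, mul_pow, Real.sq_sqrt hL0, Real.sq_sqrt ht'.le]
    norm_num
    ring
  calc Real.sqrt (8 * ((n:ℝ) * Real.log ((n:ℝ) * T + 1) + 2 * Real.log T + 1) / t)
      ≤ Real.sqrt (64 * (n:ℝ)^6 * Real.log T / t) := Real.sqrt_le_sqrt h1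
    _ = Real.sqrt ((8 * (n:ℝ)^3 * Real.sqrt (Real.log T) / Real.sqrt t)^2) := by rw [heq]
    _ = 8 * (n:ℝ)^3 * Real.sqrt (Real.log T) / Real.sqrt t := by
        apply Real.sqrt_sq
        positivity

lemma small_term_bound {n T t : ℕ} (hn : 1 ≤ n) (hT : 2 ≤ T) (ht : 1 ≤ t) (htT : t ≤ T) :
    8 / (T:ℝ) ≤ 10 * (n:ℝ)^3 * Real.sqrt (Real.log T) / Real.sqrt t := by
  have hT' : (2:ℝ) ≤ T := by exact_mod_cast hT
  have ht' : (1:ℝ) ≤ t := by exact_mod_cast ht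
  have htT' : (t:ℝ) ≤ T := by exact_mod_cast htT
  have hn' : (1:ℝ) ≤ n := by exact_mod_cast hn
  have hst : Real.sqrt t ≤ Real.sqrt T := Real.sqrt_le_sqrt htT'
  have hstpos : (0:ℝ) < Real.sqrt t := Real.sqrt_pos.mpr (by linarith)
  have hsT : Real.sqrt T ≤ T := by
    have h := Real.sqrt_le_sqrt (show (T:ℝ) ≤ (T:ℝ)^2 by nlinarith)
    rwa [Real.sqrt_sq (by linarith)] at h
  have hlog : (0.8 : ℝ) ≤ Real.sqrt (Real.log T) := by
    rw [show (0.8:ℝ) = Real.sqrt 0.64 by rw [show (0.64:ℝ) = 0.8^2 by norm_num,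
      Real.sqrt_sq (by norm_num)]]
    exact Real.sqrt_le_sqrt (by linarith [logT_ge hT])
  have hn2 : (1:ℝ) ≤ (n:ℝ)^2 := by nlinarith
  have hn3 : (1:ℝ) ≤ (n:ℝ)^3 := by
    nlinarith [mul_le_mul_of_nonneg_left hn2 (show (0:ℝ) ≤ (n:ℝ) by linarith)]
  -- 8/T ≤ 8/sqrt T ≤ 8/sqrt t ≤ 10 n³ sqrt(log T)/ sqrt t
  have step1 : 8 / (T:ℝ) ≤ 8 / Real.sqrt T := by
    apply div_le_div_of_nonneg_left (by norm_num) (Real.sqrt_pos.mpr (by linarith)) hsT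
  have step2 : 8 / Real.sqrt T ≤ 8 / Real.sqrt t := by
    apply div_le_div_of_nonneg_left (by norm_num) hstpos hst
  have step3 : 8 / Real.sqrt t ≤ 10 * (n:ℝ)^3 * Real.sqrt (Real.log T) / Real.sqrt t := by
    rw [div_eq_mul_inv, div_eq_mul_inv]
    apply mul_le_mul_of_nonneg_right _ (inv_nonneg.mpr hstpos.le)
    nlinarith
  linarith

lemma final_bound {n T t : ℕ} (hn : 1 ≤ n) (hT : 2 ≤ T) (ht : 1 ≤ t) (htT : t ≤ T)
    {B : ℝ} (hB : 0 ≤ B) :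
    B * Real.sqrt (8 * ((n:ℝ) * Real.log ((n:ℝ) * T + 1) + 2 * Real.log T + 1) / t)
      + 8 * B / (T:ℝ)
      ≤ 40 * (n:ℝ)^3 * B * Real.sqrt (Real.log T) / Real.sqrt t := by
  have h1 := sqrt_term_bound hn hT ht
  have h2 := small_term_bound hn hT ht htT
  have hb1 : B * Real.sqrt (8 * ((n:ℝ) * Real.log ((n:ℝ) * T + 1) + 2 * Real.log T + 1) / t)
      ≤ B * (8 * (n:ℝ)^3 * Real.sqrt (Real.log T) / Real.sqrt t) :=
    mul_le_mul_of_nonneg_left h1 hB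
  have hb2 : 8 * B / (T:ℝ) = B * (8 / (T:ℝ)) := by ring
  have hb3 : B * (8 / (T:ℝ)) ≤ B * (10 * (n:ℝ)^3 * Real.sqrt (Real.log T) / Real.sqrt t) :=
    mul_le_mul_of_nonneg_left h2 hB
  have hfin : B * (8 * (n:ℝ)^3 * Real.sqrt (Real.log T) / Real.sqrt t)
      + B * (10 * (n:ℝ)^3 * Real.sqrt (Real.log T) / Real.sqrt t)
      = 18 * (n:ℝ)^3 * B * Real.sqrt (Real.log T) / Real.sqrt t := by ring
  have hlast : 18 * (n:ℝ)^3 * B * Real.sqrt (Real.log T) / Real.sqrt t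
      ≤ 40 * (n:ℝ)^3 * B * Real.sqrt (Real.log T) / Real.sqrt t := by
    rw [div_eq_mul_inv, div_eq_mul_inv]
    apply mul_le_mul_of_nonneg_right _ (inv_nonneg.mpr (Real.sqrt_nonneg _))
    have : (0:ℝ) ≤ (n:ℝ)^3 * B * Real.sqrt (Real.log T) := by positivity
    nlinarith
  linarith

end Numeric

end Stmt11Aux


open Stmt11Aux

theorem stmt11 (n T t : ℕ) (hn : 1 ≤ n) (ht : 1 ≤ t) (htT : t ≤ T)
    (c l : Fin n → Fin n → ℝ)
    (hc : ∀ i j, 0 ≤ c i j) (hl : ∀ i j, 0 ≤ l i j)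
    (cmax lmax : ℝ)
    (hcmax : IsGreatest {x : ℝ | ∃ i j, x = c i j} cmax)
    (hlmax : IsGreatest {x : ℝ | ∃ i j, x = l i j} lmax)
    {Ω : Type*} [MeasurableSpace Ω] (μ : Measure Ω) [IsProbabilityMeasure μ]
    (d : Fin t → Ω → Fin n → ℝ) (P : Fin t → Ω → Fin n → Fin n → ℝ)
    (hmeas : ∀ s, Measurable (fun ω => (d s ω, P s ω)))
    (hindep : iIndepFun (fun s ω => (d s ω, P s ω)) μ)
    (hident : ∀ s s' : Fin t,
      IdentDistrib (fun ω => (d s ω, P s ω)) (fun ω => (d s' ω, P s' ω)) μ μ)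
    (hdval : ∀ s ω i, d s ω i ∈ Set.Icc (0 : ℝ) 1)
    (hPval : ∀ s ω, RowStochastic (P s ω)) :
    ENNReal.ofReal (1 - 3 / (T : ℝ) ^ 2) ≤
      μ {ω | sSup {r : ℝ | ∃ S ∈ stdSimplex ℝ (Fin n),
          r = |(1 / t : ℝ) * (∑ s, Gcost c l S (d s ω) (P s ω))
                - ∫ ω', Gcost c l S (d ⟨0, ht⟩ ω') (P ⟨0, ht⟩ ω') ∂μ|}
        ≤ 40 * (n : ℝ) ^ 3 * (cmax + lmax) * Real.sqrt (Real.log T) / Real.sqrt t} := by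
  classical
  have hn0 : 0 < n := hn
  have ht0 : 0 < t := ht
  have ht0' : (0:ℝ) < t := by exact_mod_cast ht0
  set i0 : Fin t := ⟨0, ht⟩ with hi0
  have hcub : ∀ i j, c i j ≤ cmax := fun i j => hcmax.2 ⟨i, j, rfl⟩
  have hlub : ∀ i j, l i j ≤ lmax := fun i j => hlmax.2 ⟨i, j, rfl⟩
  have hcm : 0 ≤ cmax := by obtain ⟨i, j, he⟩ := hcmax.1; exact he ▸ hc i j
  have hlm : 0 ≤ lmax := by obtain ⟨i, j, he⟩ := hlmax.1; exact he ▸ hl i j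
  set B := cmax + lmax with hB
  have hB0 : 0 ≤ B := add_nonneg hcm hlm
  -- trivial case T ≤ 1
  rcases Nat.lt_or_ge T 2 with hT1 | hT2
  · have hTeq : T = 1 := le_antisymm (by omega) (le_trans ht htT)
    have hneg : (1:ℝ) - 3 / (T:ℝ)^2 ≤ 0 := by
      rw [hTeq]; norm_num
    rw [ENNReal.ofReal_eq_zero.mpr hneg]
    exact bot_le
  have hT2' : (2:ℝ) ≤ T := by exact_mod_cast hT2
  -- basic facts about the random costs
  have hPs : ∀ s ω i, (∑ j, P s ω i j) = 1 := fun s ω => (hPval s ω).2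
  have hXeq : ∀ (S : Fin n → ℝ) (s : Fin t),
      (fun ω => Gcost c l S (d s ω) (P s ω))
        = (Fsur c l S) ∘ (fun ω => (d s ω, P s ω)) := by
    intro S s
    funext ω
    exact (Fsur_eq_Gcost (hPs s ω)).symm
  have hXmeas : ∀ (S : Fin n → ℝ) (s : Fin t),
      Measurable (fun ω => Gcost c l S (d s ω) (P s ω)) := by
    intro S s
    rw [hXeq S s]
    exact ((continuous_Fsur hn0 hc hcub S).measurable).comp (hmeas s)
  have hXbdd : ∀ S ∈ stdSimplex ℝ (Fin n), ∀ (s : Fin t) (ω : Ω),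
      Gcost c l S (d s ω) (P s ω) ∈ Set.Icc (-lmax) (2*cmax) :=
    fun S hS s ω => Gcost_mem_Icc hn0 hc hl hcub hlm hlub hS (hdval s ω) (hPval s ω)
  have hXint : ∀ S ∈ stdSimplex ℝ (Fin n), ∀ s : Fin t,
      Integrable (fun ω => Gcost c l S (d s ω) (P s ω)) μ := by
    intro S hS s
    apply integrable_of_abs_bound (hXmeas S s).aestronglyMeasurable (2*cmax + lmax)
    intro ω
    have h := hXbdd S hS s ω
    rw [abs_le]
    exact ⟨by linarith [h.1, hcm], by linarith [h.2, hlm]⟩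
  set E : (Fin n → ℝ) → ℝ := fun S => ∫ ω', Gcost c l S (d i0 ω') (P i0 ω') ∂μ with hE
  have hEeq : ∀ S ∈ stdSimplex ℝ (Fin n), ∀ s : Fin t,
      ∫ ω, Gcost c l S (d s ω) (P s ω) ∂μ = E S := by
    intro S hS s
    have hid : IdentDistrib ((Fsur c l S) ∘ fun ω => (d s ω, P s ω))
        ((Fsur c l S) ∘ fun ω => (d i0 ω, P i0 ω)) μ μ :=
      (hident s i0).comp ((continuous_Fsur (l := l) hn0 hc hcub S).measurable)
    have h2 := hid.integral_eq
    calc ∫ ω, Gcost c l S (d s ω) (P s ω) ∂μ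
        = ∫ x, ((Fsur c l S) ∘ fun ω => (d s ω, P s ω)) x ∂μ := by rw [hXeq S s]
      _ = ∫ x, ((Fsur c l S) ∘ fun ω => (d i0 ω, P i0 ω)) x ∂μ := h2
      _ = E S := (congrArg (integral μ) (hXeq S i0)).symm
  have hEbdd : ∀ S ∈ stdSimplex ℝ (Fin n), E S ∈ Set.Icc (-lmax) (2*cmax) := by
    intro S hS
    constructor
    · have h := integral_mono (integrable_const (-lmax)) (hXint S hS i0)
        (fun ω => (hXbdd S hS i0 ω).1)
      rwa [integral_const, probReal_univ, one_smul] at h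
    · have h := integral_mono (hXint S hS i0) (integrable_const (2*cmax))
        (fun ω => (hXbdd S hS i0 ω).2)
      rwa [integral_const, probReal_univ, one_smul] at h
  -- degenerate case B = 0
  rcases eq_or_lt_of_le hB0 with hBz | hBpos
  · have hc0 : cmax = 0 := by linarith [hB ▸ hBz.symm]
    have hl0 : lmax = 0 := by linarith [hB ▸ hBz.symm]
    have hzero : ∀ S ∈ stdSimplex ℝ (Fin n), ∀ (s : Fin t) (ω : Ω),
        Gcost c l S (d s ω) (P s ω) = 0 := by
      intro S hS s ω
      have h := hXbdd S hS s ω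
      rw [hc0, hl0] at h
      have := h.1; have := h.2
      linarith [h.1, h.2]
    have hall : ∀ ω : Ω, ω ∈ {ω | sSup {r : ℝ | ∃ S ∈ stdSimplex ℝ (Fin n),
        r = |(1 / t : ℝ) * (∑ s, Gcost c l S (d s ω) (P s ω))
              - ∫ ω', Gcost c l S (d i0 ω') (P i0 ω') ∂μ|}
        ≤ 40 * (n : ℝ) ^ 3 * B * Real.sqrt (Real.log T) / Real.sqrt t} := by
      intro ω
      simp only [Set.mem_setOf_eq]
      have hbound : 40 * (n : ℝ) ^ 3 * B * Real.sqrt (Real.log T) / Real.sqrt t = 0 := by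
        rw [← hBz]
        ring
      rw [hbound]
      apply Real.sSup_le _ le_rfl
      rintro r ⟨S, hS, rfl⟩
      have h1 : ∑ s, Gcost c l S (d s ω) (P s ω) = 0 :=
        Finset.sum_eq_zero fun s _ => hzero S hS s ω
      have h2 : (∫ ω', Gcost c l S (d i0 ω') (P i0 ω') ∂μ) = 0 := by
        rw [show (fun ω' => Gcost c l S (d i0 ω') (P i0 ω')) = fun _ => (0:ℝ) from
          funext fun ω' => hzero S hS i0 ω']
        simp
      rw [h1, h2]
      simp
    rw [Set.eq_univ_of_forall hall, measure_univ]
    exact ENNReal.ofReal_le_one.mpr (by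
      have : (0:ℝ) ≤ 3 / (T:ℝ)^2 := by positivity
      linarith)
  -- main case
  set m := n * T with hmdef
  have hm0 : 0 < m := Nat.mul_pos hn0 (by omega)
  have hmR : ((m:ℕ):ℝ) = (n:ℝ) * T := by rw [hmdef]; push_cast; ring
  set ψ : (Fin n → Fin (m+1)) → (Fin n → ℝ) := gridPt hn0 m with hψ
  have hψmem : ∀ k, ψ k ∈ stdSimplex ℝ (Fin n) := fun k => gridPt_mem hn0 hm0 k
  set K : ℝ := (n:ℝ) * Real.log ((n:ℝ) * T + 1) + 2 * Real.log T + 1 with hKdef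
  have hK0 : 0 ≤ K := by
    have h1 : 0 ≤ Real.log ((n:ℝ) * T + 1) := by
      apply Real.log_nonneg
      have : (1:ℝ) ≤ n := by exact_mod_cast hn
      nlinarith
    have h2 : 0 ≤ Real.log T := logT_nonneg hT2
    have : (0:ℝ) ≤ n := by positivity
    nlinarith
  set lam : ℝ := B * Real.sqrt (8 * K / t) with hlam
  have hlam0 : 0 ≤ lam := mul_nonneg hB0 (Real.sqrt_nonneg _)
  set Y : (Fin n → Fin (m+1)) → Fin t → Ω → ℝ :=
    fun k s ω => Gcost c l (ψ k) (d s ω) (P s ω) - E (ψ k) with hY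
  have hYmeas : ∀ k s, Measurable (Y k s) :=
    fun k s => (hXmeas (ψ k) s).sub measurable_const
  have hYbdd : ∀ k s ω, |Y k s ω| ≤ 2 * B := by
    intro k s ω
    have h1 := hXbdd (ψ k) (hψmem k) s ω
    have h2 := hEbdd (ψ k) (hψmem k)
    rw [abs_le]
    constructor
    · have := h1.1; have := h2.2; simp only [hY]; rw [hB]; linarith [h1.1, h2.2]
    · simp only [hY]; rw [hB]; linarith [h1.2, h2.1]
  have hYmean : ∀ k s, ∫ ω, Y k s ω ∂μ = 0 := by
    intro k s
    simp only [hY]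
    rw [integral_sub (hXint (ψ k) (hψmem k) s) (integrable_const _), integral_const,
      probReal_univ, one_smul, hEeq (ψ k) (hψmem k) s, sub_self]
  have hYindep : ∀ k, iIndepFun (Y k) μ := by
    intro k
    have hcomp := hindep.comp
      (fun _ => fun p : (Fin n → ℝ) × (Fin n → Fin n → ℝ) => Fsur c l (ψ k) p - E (ψ k))
      (fun _ => ((continuous_Fsur hn0 hc hcub (ψ k)).measurable).sub measurable_const)
    have hfeq : Y k = fun s =>
        (fun p : (Fin n → ℝ) × (Fin n → Fin n → ℝ) => Fsur c l (ψ k) p - E (ψ k))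
          ∘ (fun ω => (d s ω, P s ω)) := by
      funext s ω
      simp only [hY, Function.comp_apply]
      rw [Fsur_eq_Gcost (hPs s ω)]
    rw [hfeq]
    exact hcomp
  -- Hoeffding tail bound for each grid point
  have htail : ∀ k, μ {ω | (t:ℝ) * lam < |∑ s, Y k s ω|}
      ≤ ENNReal.ofReal (2 * Real.exp (-K)) := by
    intro k
    have hb := hoeffding_abs ht0 (Y k) (hYmeas k) (hYindep k)
      (show (0:ℝ) < 2*B by linarith) (hYbdd k) (hYmean k)
      (show (0:ℝ) ≤ (t:ℝ) * lam by positivity)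
    have hexp : -(((t:ℝ) * lam) ^ 2) / (2 * (t:ℝ) * (2*B)^2) = -K := by
      rw [hlam]
      rw [mul_pow, mul_pow, Real.sq_sqrt (by positivity : (0:ℝ) ≤ 8 * K / t)]
      field_simp
      ring
    rwa [hexp] at hb
  -- good event
  set Egood := ⋂ k : Fin n → Fin (m+1), {ω | |∑ s, Y k s ω| ≤ (t:ℝ) * lam} with hEg
  have hEgmeas : MeasurableSet Egood := by
    apply MeasurableSet.iInter
    intro k
    exact measurableSet_le (Finset.measurable_sum _ fun s _ => hYmeas k s).abs
      measurable_const
  have hcompl : μ Egoodᶜ ≤ ENNReal.ofReal (3 / (T:ℝ)^2) := by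
    rw [hEg, Set.compl_iInter]
    refine le_trans (measure_iUnion_fintype_le μ _) ?_
    have hsingle : ∀ k : Fin n → Fin (m+1),
        μ ({ω | |∑ s, Y k s ω| ≤ (t:ℝ) * lam}ᶜ) ≤ ENNReal.ofReal (2 * Real.exp (-K)) := by
      intro k
      have : ({ω | |∑ s, Y k s ω| ≤ (t:ℝ) * lam}ᶜ : Set Ω)
          = {ω | (t:ℝ) * lam < |∑ s, Y k s ω|} := by
        ext ω
        simp [not_le]
      rw [this]
      exact htail k
    calc ∑ k : Fin n → Fin (m+1), μ ({ω | |∑ s, Y k s ω| ≤ (t:ℝ) * lam}ᶜ)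
        ≤ ∑ _k : Fin n → Fin (m+1), ENNReal.ofReal (2 * Real.exp (-K)) :=
          Finset.sum_le_sum fun k _ => hsingle k
      _ = (Fintype.card (Fin n → Fin (m+1))) * ENNReal.ofReal (2 * Real.exp (-K)) := by
          rw [Finset.sum_const, Finset.card_univ, nsmul_eq_mul]
      _ = ENNReal.ofReal (((m+1 : ℕ)^n : ℝ) * (2 * Real.exp (-K))) := by
          have hcard : ((Fintype.card (Fin n → Fin (m+1)) : ℕ) : ENNReal)
              = ENNReal.ofReal (((m+1 : ℕ)^n : ℝ)) := by
            rw [Fintype.card_fun, Fintype.card_fin, Fintype.card_fin,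
              ← ENNReal.ofReal_natCast]
            norm_cast
          rw [hcard, ← ENNReal.ofReal_mul (by positivity)]
      _ ≤ ENNReal.ofReal (3 / (T:ℝ)^2) :=
          ENNReal.ofReal_le_ofReal (count_bound hn hT2)
    
  have hEgood_ge : ENNReal.ofReal (1 - 3 / (T:ℝ)^2) ≤ μ Egood := by
    have h1 : (1:ENNReal) ≤ μ Egood + ENNReal.ofReal (3 / (T:ℝ)^2) := by
      have := measure_add_measure_compl (μ := μ) hEgmeas
      rw [measure_univ] at this
      calc (1:ENNReal) = μ Egood + μ Egoodᶜ := this.symm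
        _ ≤ μ Egood + ENNReal.ofReal (3 / (T:ℝ)^2) := by gcongr
    have h2 : ENNReal.ofReal (1 - 3 / (T:ℝ)^2) + ENNReal.ofReal (3 / (T:ℝ)^2) = 1 := by
      rw [← ENNReal.ofReal_add _ (by positivity)]
      · norm_num
      · have h3 : 3 / (T:ℝ)^2 ≤ 1 := by
          rw [div_le_one (by positivity)]
          nlinarith
        linarith
    rw [← h2] at h1
    exact (ENNReal.add_le_add_iff_right ENNReal.ofReal_ne_top).mp h1
  refine le_trans hEgood_ge (measure_mono ?_)
  -- containment
  intro ω hω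
  rw [hEg] at hω
  simp only [Set.mem_iInter, Set.mem_setOf_eq] at hω
  simp only [Set.mem_setOf_eq]
  have hbound0 : (0:ℝ) ≤ 40 * (n : ℝ) ^ 3 * B * Real.sqrt (Real.log T) / Real.sqrt t := by
    apply div_nonneg _ (Real.sqrt_nonneg _)
    apply mul_nonneg _ (Real.sqrt_nonneg _)
    apply mul_nonneg (by positivity) hB0
  apply Real.sSup_le _ hbound0
  rintro r ⟨S, hS, rfl⟩
  set k := roundPt m S hS with hk
  have hS' : ψ k ∈ stdSimplex ℝ (Fin n) := hψmem k
  have hδ : ∑ i, |S i - ψ k i| ≤ 2 * n / m := gridPt_approx hn0 hm0 hS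
  have hδ0 : (0:ℝ) ≤ ∑ i, |S i - ψ k i| :=
    Finset.sum_nonneg fun i _ => abs_nonneg _
  have h2B : 2 * cmax + lmax ≤ 2 * B := by rw [hB]; linarith
  have h2B0 : 0 ≤ 2 * cmax + lmax := by linarith
  have hlip : ∀ (s : Fin t) (ω' : Ω),
      |Gcost c l S (d s ω') (P s ω') - Gcost c l (ψ k) (d s ω') (P s ω')|
        ≤ 2 * B * (2 * n / m) := by
    intro s ω'
    refine le_trans (Gcost_lip hn0 hc hcub hlm hlub hl (hPval s ω')) ?_
    calc (2 * cmax + lmax) * ∑ i, |S i - ψ k i|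
        ≤ (2 * B) * (2 * n / m) := by
          apply mul_le_mul h2B hδ hδ0 (by linarith)
      _ = 2 * B * (2 * n / m) := rfl
  -- average difference
  have havg : |(1 / t : ℝ) * (∑ s, Gcost c l S (d s ω) (P s ω))
      - (1 / t : ℝ) * (∑ s, Gcost c l (ψ k) (d s ω) (P s ω))| ≤ 2 * B * (2 * n / m) := by
    rw [← mul_sub, ← Finset.sum_sub_distrib, abs_mul,
      abs_of_nonneg (by positivity : (0:ℝ) ≤ (1 / t : ℝ))]
    calc (1 / t : ℝ) * |∑ s, (Gcost c l S (d s ω) (P s ω)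
          - Gcost c l (ψ k) (d s ω) (P s ω))|
        ≤ (1 / t : ℝ) * ∑ s, |Gcost c l S (d s ω) (P s ω)
            - Gcost c l (ψ k) (d s ω) (P s ω)| := by
          apply mul_le_mul_of_nonneg_left (Finset.abs_sum_le_sum_abs _ _) (by positivity)
      _ ≤ (1 / t : ℝ) * ∑ _s : Fin t, (2 * B * (2 * n / m)) := by
          apply mul_le_mul_of_nonneg_left
            (Finset.sum_le_sum fun s _ => hlip s ω) (by positivity)
      _ = 2 * B * (2 * n / m) := by
          rw [Finset.sum_const, Finset.card_univ, Fintype.card_fin, nsmul_eq_mul]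
          field_simp
  -- expectation difference
  have hEdiff : |E (ψ k) - E S| ≤ 2 * B * (2 * n / m) := by
    have hsub : E S - E (ψ k) = ∫ ω', (Gcost c l S (d i0 ω') (P i0 ω')
        - Gcost c l (ψ k) (d i0 ω') (P i0 ω')) ∂μ := by
      rw [integral_sub (hXint S hS i0) (hXint (ψ k) hS' i0)]
    have hb := norm_integral_le_of_norm_le_const (μ := μ)
      (f := fun ω' => Gcost c l S (d i0 ω') (P i0 ω')
        - Gcost c l (ψ k) (d i0 ω') (P i0 ω')) (C := 2 * B * (2 * n / m))
      (Filter.Eventually.of_forall fun ω' => by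
        rw [Real.norm_eq_abs]; exact hlip i0 ω')
    rw [probReal_univ, mul_one, Real.norm_eq_abs, ← hsub] at hb
    rwa [abs_sub_comm]
  -- middle term
  have hmid : |(1 / t : ℝ) * (∑ s, Gcost c l (ψ k) (d s ω) (P s ω)) - E (ψ k)| ≤ lam := by
    have hω' := hω k
    have hsum : ∑ s, Y k s ω
        = (∑ s, Gcost c l (ψ k) (d s ω) (P s ω)) - (t:ℝ) * E (ψ k) := by
      simp only [hY]
      rw [Finset.sum_sub_distrib, Finset.sum_const, Finset.card_univ, Fintype.card_fin,
        nsmul_eq_mul]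
    have hre : (1 / t : ℝ) * (∑ s, Gcost c l (ψ k) (d s ω) (P s ω)) - E (ψ k)
        = (1 / t : ℝ) * (∑ s, Y k s ω) := by
      rw [hsum]
      field_simp
    rw [hre, abs_mul, abs_of_nonneg (by positivity : (0:ℝ) ≤ (1 / t : ℝ))]
    calc (1 / t : ℝ) * |∑ s, Y k s ω| ≤ (1 / t : ℝ) * ((t:ℝ) * lam) :=
          mul_le_mul_of_nonneg_left hω' (by positivity)
      _ = lam := by field_simp
  -- put everything together
  have hdecomp : (1 / t : ℝ) * (∑ s, Gcost c l S (d s ω) (P s ω)) - E S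
      = ((1 / t : ℝ) * (∑ s, Gcost c l S (d s ω) (P s ω))
          - (1 / t : ℝ) * (∑ s, Gcost c l (ψ k) (d s ω) (P s ω)))
        + ((1 / t : ℝ) * (∑ s, Gcost c l (ψ k) (d s ω) (P s ω)) - E (ψ k))
        + (E (ψ k) - E S) := by ring
  have htRiangle : |(1 / t : ℝ) * (∑ s, Gcost c l S (d s ω) (P s ω)) - E S|
      ≤ lam + (2 * B * (2 * n / m) + 2 * B * (2 * n / m)) := by
    rw [hdecomp]
    refine le_trans (abs_add_le _ _) ?_
    refine le_trans (add_le_add (abs_add_le _ _) le_rfl) ?_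
    linarith [havg, hmid, hEdiff]
  have hmterm : 2 * B * (2 * (n:ℝ) / m) + 2 * B * (2 * (n:ℝ) / m) = 8 * B / (T:ℝ) := by
    rw [hmR]
    have hn' : (0:ℝ) < n := by exact_mod_cast hn0
    field_simp
    ring
  have hfb := final_bound (B := B) hn hT2 ht htT hB0
  calc |(1 / t : ℝ) * (∑ s, Gcost c l S (d s ω) (P s ω)) - E S|
      ≤ lam + (2 * B * (2 * n / m) + 2 * B * (2 * n / m)) := htRiangle
    _ = lam + 8 * B / (T:ℝ) := by rw [hmterm]
    _ ≤ 40 * (n : ℝ) ^ 3 * B * Real.sqrt (Real.log T) / Real.sqrt t := by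
        rw [hlam, hKdef]
        exact hfb
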